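/- arXiv:1502.06208 — 4 statements merged into one kernel-verified Lean document; each statement's English description precedes it below -/
import Mathlib

section
/- For every n ∈ ℕ there exists a finite semimetric space Y with |Y| = 2n, doubling constant λ(Y) bounded by a universal constant independent of n, and which contains a subset C of size n whose pairwise distances are all at least rad(Y). Consequently, in semimetric spaces a bounded doubling constant does not imply a packing property. -/
open Sum

noncomputable def SMq (m : ℕ) : ℝ := (1 / 4 : ℝ) ^ (m + 1)

lemma SMq_pos (m : ℕ) : 0 < SMq m := by unfold SMq; positivity

lemma SMq_anti {m k : ℕ} (h : m ≤ k) : SMq k ≤ SMq m :=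
  pow_le_pow_of_le_one (by norm_num) (by norm_num) (by omega)

lemma SMq_le_quarter (m : ℕ) : SMq m ≤ 1 / 4 := by
  have := SMq_anti (Nat.zero_le m)
  have h0 : SMq 0 = 1/4 := by norm_num [SMq]
  linarith

lemma SMq_succ (m : ℕ) : SMq (m + 1) = SMq m * (1/4) := by
  unfold SMq; rw [pow_succ]

noncomputable def SMd {n : ℕ} : (Fin n ⊕ Fin n) → (Fin n ⊕ Fin n) → ℝ
  | inl i, inl j => if i = j then 0 else 1
  | inl i, inr j => SMq (min i.val j.val)
  | inr i, inl j => SMq (min i.val j.val)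
  | inr i, inr j => if i = j then 0 else SMq (min i.val j.val)

def SMidx {n : ℕ} : Fin n ⊕ Fin n → ℕ := Sum.elim Fin.val Fin.val

lemma SMd_self {n : ℕ} (z : Fin n ⊕ Fin n) : SMd z z = 0 := by
  rcases z with i | i <;> simp [SMd]

lemma SMd_inr_eq {n : ℕ} (a : Fin n) (y : Fin n ⊕ Fin n) (h : y ≠ inr a) :
    SMd (inr a) y = SMq (min a.val (SMidx y)) := by
  rcases y with j | j
  · rfl
  · have h' : a ≠ j := fun hh => h (by rw [hh])
    simp [SMd, SMidx, h']

lemma card_le_four {α : Type*} [DecidableEq α] (a b c d : α) :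
    ({a, b, c, d} : Finset α).card ≤ 4 := by
  have h2 : ({c, d} : Finset α).card ≤ 2 :=
    le_trans (Finset.card_insert_le _ _) (by simp)
  have h3 : ({b, c, d} : Finset α).card ≤ 3 :=
    le_trans (Finset.card_insert_le _ _) (by omega)
  exact le_trans (Finset.card_insert_le _ _) (by omega)

/-- There is a universal constant `Λ` such that for every `n ≥ 1` there is a
finite semimetric space `Y` with `|Y| = 2n`, doubling constant at most `Λ`, containing a
subset `C` of size `n` whose pairwise distances are at least `rad(Y)`.  Hence in semimetric
spaces a bounded doubling constant does not imply a packing property. -/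
theorem semimetric_doubling_no_packing :
    ∃ Λ : ℕ, ∀ n : ℕ, 1 ≤ n →
      ∃ (Y : Type) (_ : Fintype Y) (d : Y → Y → ℝ),
        (∀ x y : Y, d x y = d y x) ∧
        (∀ x y : Y, 0 ≤ d x y) ∧
        (∀ x y : Y, d x y = 0 ↔ x = y) ∧
        Fintype.card Y = 2 * n ∧
        -- doubling constant at most Λ
        (∀ (x : Y) (r : ℝ), 0 < r →
          ∃ t : Finset Y, t.card ≤ Λ ∧
            {y : Y | d x y < r} ⊆ ⋃ c ∈ t, {y : Y | d c y < r / 2}) ∧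
        -- a rad(Y)-net of size n, where rad(Y) = sInf {r | 0 < r ∧ ∃ x, ∀ y, d x y < r}
        (∃ C : Finset Y, C.card = n ∧
          ∀ u ∈ C, ∀ v ∈ C, u ≠ v →
            sInf {r : ℝ | 0 < r ∧ ∃ x : Y, ∀ y : Y, d x y < r} ≤ d u v) := by
  refine ⟨4, fun n hn => ⟨Fin n ⊕ Fin n, inferInstance, SMd, ?_, ?_, ?_, ?_, ?_, ?_⟩⟩
  · -- symmetry
    intro x y
    rcases x with i | i <;> rcases y with j | j
    · rcases eq_or_ne i j with rfl | h
      · rfl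
      · simp [SMd, h, h.symm]
    · show SMq (min i.val j.val) = SMq (min j.val i.val)
      rw [Nat.min_comm]
    · show SMq (min i.val j.val) = SMq (min j.val i.val)
      rw [Nat.min_comm]
    · rcases eq_or_ne i j with rfl | h
      · rfl
      · simp [SMd, h, h.symm, Nat.min_comm]
  · -- nonneg
    intro x y
    rcases x with i | i <;> rcases y with j | j
    · dsimp [SMd]; split <;> norm_num
    · exact (SMq_pos _).le
    · exact (SMq_pos _).le
    · dsimp [SMd]; split
      · norm_num
      · exact (SMq_pos _).le
  · -- eq zero iff
    intro x y
    rcases x with i | i <;> rcases y with j | j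
    · rcases eq_or_ne i j with rfl | h
      · simp [SMd]
      · simp [SMd, h]
    · simp [SMd, (SMq_pos _).ne']
    · simp [SMd, (SMq_pos _).ne']
    · rcases eq_or_ne i j with rfl | h
      · simp [SMd]
      · simp [SMd, h, (SMq_pos _).ne']
  · -- card
    simp [Fintype.card_sum]; omega
  · -- doubling
    intro x r hr
    by_cases hB : SMq (n - 1) < r
    · have hEx : ∃ k, SMq k < r := ⟨n - 1, hB⟩
      have hq0 : SMq (Nat.find hEx) < r := Nat.find_spec hEx
      set j0 := Nat.find hEx with hj0def
      have hminp : ∀ m, SMq m < r → j0 ≤ m := fun m hm => Nat.find_min' hEx hm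
      have hj0n : j0 < n := by
        have := Nat.find_min' hEx hB
        omega
      set js : Fin n := if h2 : j0 + 1 < n then ⟨j0 + 1, h2⟩ else ⟨j0, hj0n⟩ with hjsdef
      refine ⟨{x, inl ⟨j0, hj0n⟩, inr ⟨j0, hj0n⟩, inr js}, card_le_four _ _ _ _, ?_⟩
      have key : ∀ w : Fin n ⊕ Fin n, j0 ≤ SMidx w →
          ∃ c ∈ ({x, inl ⟨j0, hj0n⟩, inr ⟨j0, hj0n⟩, inr js} : Finset (Fin n ⊕ Fin n)),
            SMd c w < r / 2 := by
        intro w hw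
        rcases eq_or_lt_of_le hw with heq | hlt
        · rcases w with j | j
          · refine ⟨inl ⟨j0, hj0n⟩, by simp, ?_⟩
            have hj : (⟨j0, hj0n⟩ : Fin n) = j := Fin.ext heq
            rw [hj]
            simpa [SMd] using half_pos hr
          · refine ⟨inr ⟨j0, hj0n⟩, by simp, ?_⟩
            have hj : (⟨j0, hj0n⟩ : Fin n) = j := Fin.ext heq
            rw [hj]
            simpa [SMd] using half_pos hr
        · have hwn : SMidx w < n := by rcases w with j | j <;> exact j.isLt
          have h2 : j0 + 1 < n := by omega
          have hjs : js = ⟨j0 + 1, h2⟩ := by rw [hjsdef, dif_pos h2]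
          refine ⟨inr js, by simp, ?_⟩
          rcases eq_or_ne w (inr js) with rfl | hne
          · rw [SMd_self]; linarith
          · rw [SMd_inr_eq js w hne, hjs]
            have hmin : min (j0 + 1) (SMidx w) = j0 + 1 := min_eq_left (by omega)
            show SMq (min (j0 + 1) (SMidx w)) < r / 2
            rw [hmin, SMq_succ]
            linarith
      intro y hy
      simp only [Set.mem_setOf_eq] at hy
      simp only [Set.mem_iUnion, Set.mem_setOf_eq, exists_prop]
      rcases eq_or_ne y x with rfl | hne
      · exact ⟨y, by simp, by rw [SMd_self]; linarith⟩
      · rcases x with i | i <;> rcases y with j | j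
        · have hij : i ≠ j := fun h => hne (by rw [h])
          have hd : SMd (inl i) (inl j) = 1 := by simp [SMd, hij]
          rw [hd] at hy
          refine ⟨inr ⟨j0, hj0n⟩, by simp, ?_⟩
          have hdd : SMd (inr (⟨j0, hj0n⟩ : Fin n)) (inl j) = SMq (min j0 j.val) := rfl
          rw [hdd]
          linarith [SMq_le_quarter (min j0 j.val)]
        · have hy' : SMq (min i.val j.val) < r := hy
          exact key (inr j) (le_trans (hminp _ hy') (min_le_right _ _))
        · have hy' : SMq (min i.val j.val) < r := hy
          exact key (inl j) (le_trans (hminp _ hy') (min_le_right _ _))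
        · have hij : i ≠ j := fun h => hne (by rw [h])
          have hd : SMd (inr i) (inr j) = SMq (min i.val j.val) := if_neg hij
          rw [hd] at hy
          exact key (inr j) (le_trans (hminp _ hy) (min_le_right _ _))
    · -- tiny radius: ball is a singleton
      refine ⟨{x}, by simp, ?_⟩
      intro y hy
      simp only [Set.mem_setOf_eq] at hy
      simp only [Set.mem_iUnion, Set.mem_setOf_eq, exists_prop]
      have hr14 : r ≤ SMq (n - 1) := not_lt.1 hB
      refine ⟨x, by simp, ?_⟩
      have hyx : y = x := by
        by_contra hne
        rcases x with i | i <;> rcases y with j | j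
        · have hij : i ≠ j := fun h => hne (by rw [h])
          have hd : SMd (inl i) (inl j) = 1 := by simp [SMd, hij]
          rw [hd] at hy
          linarith [SMq_le_quarter (n - 1)]
        · have hd : SMd (inl i) (inr j) = SMq (min i.val j.val) := rfl
          rw [hd] at hy
          have hmn : min i.val j.val ≤ n - 1 := by have := j.isLt; omega
          linarith [SMq_anti hmn]
        · have hd : SMd (inr i) (inl j) = SMq (min i.val j.val) := rfl
          rw [hd] at hy
          have hmn : min i.val j.val ≤ n - 1 := by have := j.isLt; omega
          linarith [SMq_anti hmn]
        · have hij : i ≠ j := fun h => hne (by rw [h])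
          have hd : SMd (inr i) (inr j) = SMq (min i.val j.val) := if_neg hij
          rw [hd] at hy
          have hmn : min i.val j.val ≤ n - 1 := by have := j.isLt; omega
          linarith [SMq_anti hmn]
      rw [hyx, SMd_self]; linarith
  · -- the net C
    refine ⟨Finset.univ.image inl, ?_, ?_⟩
    · rw [Finset.card_image_of_injective _ Sum.inl_injective, Finset.card_univ,
        Fintype.card_fin]
    · intro u hu v hv huv
      simp only [Finset.mem_image] at hu hv
      obtain ⟨a, -, rfl⟩ := hu
      obtain ⟨b, -, rfl⟩ := hv
      have hab : a ≠ b := fun h => huv (by rw [h])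
      have hd : SMd (inl a) (inl b) = 1 := by simp [SMd, hab]
      rw [hd]
      have hbdd : BddBelow {r : ℝ | 0 < r ∧ ∃ x : Fin n ⊕ Fin n, ∀ y, SMd x y < r} :=
        ⟨0, fun s hs => hs.1.le⟩
      have hmem : (1/2 : ℝ) ∈ {r : ℝ | 0 < r ∧ ∃ x : Fin n ⊕ Fin n, ∀ y, SMd x y < r} := by
        refine ⟨by norm_num, inr ⟨0, by omega⟩, fun y => ?_⟩
        rcases eq_or_ne y (inr (⟨0, by omega⟩ : Fin n)) with rfl | hne
        · rw [SMd_self]; norm_num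
        · rw [SMd_inr_eq _ _ hne]
          linarith [SMq_le_quarter (min (⟨0, by omega⟩ : Fin n).val (SMidx y))]
      calc sInf {r : ℝ | 0 < r ∧ ∃ x : Fin n ⊕ Fin n, ∀ y, SMd x y < r} ≤ 1/2 :=
            csInf_le hbdd hmem
        _ ≤ 1 := by norm_num
end

section
/- For any semimetric space (X,d), the doubling constant is at most the density constant: λ(X) ≤ μ(X). -/
/-- For any semimetric space, the doubling constant is at most the density
constant: if every `r/2`-separated subset of an open `r`-ball has at most `μ` points,
then every open `r`-ball can be covered by at most `μ` open balls of radius `r/2`. -/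
theorem doubling_le_density_semimetric
    {X : Type*} (d : X → X → ℝ)
    (hsymm : ∀ x y, d x y = d y x)
    (hnonneg : ∀ x y, 0 ≤ d x y)
    (heq : ∀ x y, d x y = 0 ↔ x = y)
    (μ : ℕ)
    (hdens : ∀ (x : X) (r : ℝ), 0 < r → ∀ P : Finset X,
      (∀ p ∈ P, d x p < r) →
      (∀ u ∈ P, ∀ v ∈ P, u ≠ v → r / 2 ≤ d u v) →
      P.card ≤ μ) :
    ∀ (x : X) (r : ℝ), 0 < r →
      ∃ t : Finset X, t.card ≤ μ ∧
        {y : X | d x y < r} ⊆ ⋃ c ∈ t, {y : X | d c y < r / 2} := by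
  classical
  intro x r hr
  set S : Set ℕ := {n | ∃ P : Finset X, (∀ p ∈ P, d x p < r) ∧
      (∀ u ∈ P, ∀ v ∈ P, u ≠ v → r / 2 ≤ d u v) ∧ P.card = n} with hS
  have h0 : (0 : ℕ) ∈ S := ⟨∅, by simp, by simp, by simp⟩
  have hbdd : ∀ n ∈ S, n ≤ μ := by
    rintro n ⟨P, h1, h2, rfl⟩
    exact hdens x r hr P h1 h2
  have hN : sSup S ∈ S := Nat.sSup_mem ⟨0, h0⟩ ⟨μ, hbdd⟩
  obtain ⟨P, h1, h2, hcard⟩ := hN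
  refine ⟨P, ?_, ?_⟩
  · rw [hcard]; exact hbdd _ ⟨P, h1, h2, hcard⟩
  · intro y hy
    simp only [Set.mem_setOf_eq] at hy
    simp only [Set.mem_iUnion, Set.mem_setOf_eq]
    by_contra hcon
    push_neg at hcon
    have hyP : y ∉ P := by
      intro hyP
      have : d y y = 0 := (heq y y).2 rfl
      have := hcon y hyP
      linarith
    have hins : P.card + 1 ∈ S := by
      refine ⟨insert y P, ?_, ?_, ?_⟩
      · intro p hp
        rcases Finset.mem_insert.1 hp with rfl | hp
        · exact hy
        · exact h1 p hp
      · intro u hu v hv huv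
        rcases Finset.mem_insert.1 hu with hu2 | hu2
        · rcases Finset.mem_insert.1 hv with hv2 | hv2
          · exact absurd (hu2.trans hv2.symm) huv
          · subst hu2; rw [hsymm]; exact hcon v hv2
        · rcases Finset.mem_insert.1 hv with hv2 | hv2
          · subst hv2; exact hcon u hu2
          · exact h2 u hu2 v hv2 huv
      · rw [Finset.card_insert_of_notMem hyP]
    have := le_csSup ⟨μ, hbdd⟩ hins
    rw [← hcard] at this
    omega
end

section
/- Margin consistency of nets: let S be a finite labeled sample in a semimetric space with labels y : S → {−1,1}, and suppose the margin of S (minimum distance between oppositely labeled points) is at least γ. If C ⊆ S is a γ-net of S, then for every point x ∈ S, every nearest neighbor of x in C has the same label as x; hence the 1-nearest-neighbor classifier induced by C has zero error on S. -/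
/-- margin consistency of nets.  If the labeled sample `S` has margin at least
`γ` (oppositely labeled points are at distance `≥ γ`) and `C ⊆ S` is a `γ`-net of `S`,
then every nearest neighbor in `C` of any `x ∈ S` carries the label of `x`; hence the
`1`-NN classifier induced by `C` makes no error on `S`. -/
theorem net_margin_consistent
    {X : Type*} (d : X → X → ℝ)
    (hsymm : ∀ x y, d x y = d y x)
    (hnonneg : ∀ x y, 0 ≤ d x y)
    (heq : ∀ x y, d x y = 0 ↔ x = y)
    (S : Finset X) (y : X → Bool) (γ : ℝ) (hγ : 0 < γ)
    (hmarg : ∀ a ∈ S, ∀ b ∈ S, y a ≠ y b → γ ≤ d a b)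
    (C : Finset X) (hCS : C ⊆ S)
    (hsep : ∀ u ∈ C, ∀ v ∈ C, u ≠ v → γ ≤ d u v)
    (hcov : ∀ x ∈ S, ∃ c ∈ C, d x c < γ) :
    ∀ x ∈ S, ∀ c ∈ C, (∀ c' ∈ C, d x c ≤ d x c') → y c = y x := by
  intro x hx c hc hmin
  by_contra hne
  obtain ⟨c0, hc0, hlt⟩ := hcov x hx
  have h1 : d x c < γ := lt_of_le_of_lt (hmin c0 hc0) hlt
  have h2 : γ ≤ d x c := by
    have := hmarg x hx c (hCS hc) (fun h => hne h.symm)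
    exact this
  linarith
end

section
/- VC-style lower bound ingredient: let P be the distribution on k points {x₁,…,x_k} putting mass 1 − 8ε on x₁ and mass 8ε/(k−1) on each other point, with labels given by a target f : {x₁,…,x_k} → {−1,1} chosen uniformly at random among all 2^k functions. Then for any learning algorithm mapping a sample of n i.i.d. labeled points to a hypothesis h_n, the expected error (over the random target and sample) of h_n is at least (8ε/(k−1)) · (1/2) · E[number of points among x₂,…,x_k not appearing in the sample], and in particular if n ≤ (k−1)/(16ε) then the expected error is Ω(ε). -/
open MeasureTheory

lemma meas_finset' {α : Type*} [MeasurableSpace α] [MeasurableSingletonClass α]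
    (μ : Measure α) (s : Finset α) : μ ↑s = ∑ j ∈ s, μ {j} := by
  rw [← Set.biUnion_of_singleton (↑s : Set α), Finset.set_biUnion_coe,
    measure_biUnion_finset (by simpa using Set.pairwiseDisjoint_fiber id (↑s : Set α))
    (fun b _ => measurableSet_singleton b)]

lemma sum_toReal_one' {α : Type*} [Fintype α] [MeasurableSpace α] [MeasurableSingletonClass α]
    (μ : Measure α) [IsProbabilityMeasure μ] : ∑ j : α, (μ {j}).toReal = 1 := by
  rw [← ENNReal.toReal_sum (fun a _ => measure_ne_top μ _), ← meas_finset']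
  simp

lemma flip_sum' (k : ℕ) (j : Fin k) (h : (Fin k → Bool) → Bool)
    (hh : ∀ f : Fin k → Bool, h (Function.update f j (!f j)) = h f) :
    ∑ f : Fin k → Bool, (if h f ≠ f j then (1:ℝ) else 0) = 2 ^ k / 2 := by
  have hinv : Function.Involutive (fun f : Fin k → Bool => Function.update f j (!f j)) := by
    intro f; funext a; by_cases hja : a = j <;> simp [hja, Function.update]
  set S := ∑ f : Fin k → Bool, (if h f ≠ f j then (1:ℝ) else 0) with hS
  have key : S = ∑ f : Fin k → Bool, (1 - if h f ≠ f j then (1:ℝ) else 0) := by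
    rw [hS, ← Equiv.sum_comp hinv.toPerm (fun f => if h f ≠ f j then (1:ℝ) else 0)]
    refine Finset.sum_congr rfl fun f _ => ?_
    simp only [Function.Involutive.coe_toPerm, hh]
    by_cases hp : h f = f j <;> simp [hp]
  have hcard : ∑ _f : Fin k → Bool, (1:ℝ) = 2 ^ k := by
    simp [Finset.card_univ]
  rw [Finset.sum_sub_distrib, hcard, ← hS] at key
  linarith

/-- VC-style lower bound ingredient.  Let `μP` put mass `1 − 8ε` on a point
`x₀` of a `k`-point domain and mass `8ε/(k−1)` on each other point, and let the target
`f : Fin k → Bool` be uniform among all `2^k` labelings, independent of the i.i.d. inputs.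
Then for any learning algorithm `A` mapping the labeled sample to a hypothesis, the
expected error is at least `(8ε/(k−1))·(1/2)·E[#unseen points ≠ x₀]`; in particular, if
`n ≤ (k−1)/(16ε)` then the expected error is at least `2ε` (i.e. `Ω(ε)`). -/
theorem vc_lower_bound_ingredient
    (k n : ℕ) (hk : 2 ≤ k) (ε : ℝ) (hε0 : 0 < ε) (hε8 : ε < 1 / 8)
    (x0 : Fin k)
    (μP : Measure (Fin k)) [IsProbabilityMeasure μP]
    (hμ0 : μP {x0} = ENNReal.ofReal (1 - 8 * ε))
    (hμj : ∀ j : Fin k, j ≠ x0 → μP {j} = ENNReal.ofReal (8 * ε / ((k : ℝ) - 1)))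
    (μf : Measure (Fin k → Bool)) [IsProbabilityMeasure μf]
    (hμf : ∀ f : Fin k → Bool, μf {f} = ENNReal.ofReal ((1 : ℝ) / 2 ^ k))
    (A : (Fin n → Fin k × Bool) → (Fin k → Bool)) :
    ((8 * ε / ((k : ℝ) - 1)) * (1 / 2) *
        ∫ ω, ((Finset.univ.filter fun j : Fin k =>
            j ≠ x0 ∧ ∀ i : Fin n, ω.1 i ≠ j).card : ℝ)
          ∂((Measure.pi fun _ : Fin n => μP).prod μf) ≤
      ∫ ω, (μP {j : Fin k |
            A (fun i => (ω.1 i, ω.2 (ω.1 i))) j ≠ ω.2 j}).toReal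
          ∂((Measure.pi fun _ : Fin n => μP).prod μf)) ∧
    ((n : ℝ) ≤ ((k : ℝ) - 1) / (16 * ε) →
      2 * ε ≤
        ∫ ω, (μP {j : Fin k |
            A (fun i => (ω.1 i, ω.2 (ω.1 i))) j ≠ ω.2 j}).toReal
          ∂((Measure.pi fun _ : Fin n => μP).prod μf)) := by
  have hk1 : (1:ℝ) ≤ (k:ℝ) - 1 := by
    have h2 : (2:ℝ) ≤ (k:ℝ) := by exact_mod_cast hk
    linarith
  set p : ℝ := 8 * ε / ((k:ℝ) - 1) with hpdef
  have hp0 : 0 < p := div_pos (by linarith) (by linarith)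
  have hp8 : p ≤ 8 * ε := div_le_self (by linarith) hk1
  have hp1 : p < 1 := lt_of_le_of_lt hp8 (by linarith)
  -- basic toReal values
  have hPj : ∀ j : Fin k, j ≠ x0 → (μP {j}).toReal = p := fun j hj => by
    rw [hμj j hj]; exact ENNReal.toReal_ofReal hp0.le
  have hVf : ∀ f : Fin k → Bool, (μf {f}).toReal = 1 / 2 ^ k := fun f => by
    rw [hμf f, ENNReal.toReal_ofReal (by positivity)]
  have hW : ∀ x : Fin n → Fin k,
      ((Measure.pi fun _ : Fin n => μP) {x}).toReal = ∏ i, (μP {x i}).toReal := fun x => by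
    rw [← Set.univ_pi_singleton x, Measure.pi_pi, ENNReal.toReal_prod]
  -- integral as double sum
  have hint : ∀ g : (Fin n → Fin k) → (Fin k → Bool) → ℝ,
      ∫ ω, g ω.1 ω.2 ∂((Measure.pi fun _ : Fin n => μP).prod μf)
        = ∑ x : Fin n → Fin k, ∑ f : Fin k → Bool,
            (((Measure.pi fun _ : Fin n => μP) {x}).toReal * (1 / 2 ^ k)) * g x f := by
    intro g
    rw [integral_fintype .of_finite, Fintype.sum_prod_type]
    refine Finset.sum_congr rfl fun x _ => Finset.sum_congr rfl fun f _ => ?_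
    rw [smul_eq_mul]
    congr 1
    have hxt : ({(x, f)} : Set ((Fin n → Fin k) × (Fin k → Bool))) = {x} ×ˢ {f} := by
      simp
    rw [measureReal_def, hxt, Measure.prod_prod, ENNReal.toReal_mul, hVf f]
  -- the unseen-count factor
  have hsumV : ∀ (c : (Fin n → Fin k) → ℝ),
      (∑ x : Fin n → Fin k, ∑ f : Fin k → Bool,
          (((Measure.pi fun _ : Fin n => μP) {x}).toReal * (1 / 2 ^ k)) * c x)
        = ∑ x : Fin n → Fin k, ((Measure.pi fun _ : Fin n => μP) {x}).toReal * c x := by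
    intro c
    refine Finset.sum_congr rfl fun x _ => ?_
    rw [Finset.sum_const, Finset.card_univ, nsmul_eq_mul]
    have hcb : (Fintype.card (Fin k → Bool) : ℝ) = 2 ^ k := by simp
    rw [hcb]
    have h2k : (2:ℝ) ^ k ≠ 0 := by positivity
    field_simp
  -- half lemma: for unseen j, the label is uniform
  have hhalf : ∀ (x : Fin n → Fin k) (j : Fin k), (∀ i, x i ≠ j) →
      ∑ f : Fin k → Bool,
        (1 / 2 ^ k : ℝ) * (if A (fun i => (x i, f (x i))) j ≠ f j then 1 else 0) = 1 / 2 := by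
    intro x j hx
    rw [← Finset.mul_sum, flip_sum' k j (fun f => A (fun i => (x i, f (x i))) j) ?_]
    · have h2k : (2:ℝ) ^ k ≠ 0 := by positivity
      field_simp
    · intro f
      have hsample : (fun i => (x i, Function.update f j (!f j) (x i)))
          = (fun i => (x i, f (x i))) := by
        funext i; rw [Function.update_of_ne (hx i)]
      simp only [hsample]
  -- claim B : ∑_f V * card T = 1/2 * card Ux
  have hclaimB : ∀ x : Fin n → Fin k,
      ∑ f : Fin k → Bool, (1 / 2 ^ k : ℝ) *
          (((Finset.univ.filter fun j : Fin k => j ≠ x0 ∧ ∀ i : Fin n, x i ≠ j).filter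
              fun j => A (fun i => (x i, f (x i))) j ≠ f j).card : ℝ)
        = (1/2) * ((Finset.univ.filter fun j : Fin k => j ≠ x0 ∧ ∀ i : Fin n, x i ≠ j).card : ℝ) := by
    intro x
    have hcardT : ∀ f : Fin k → Bool,
        (((Finset.univ.filter fun j : Fin k => j ≠ x0 ∧ ∀ i : Fin n, x i ≠ j).filter
              fun j => A (fun i => (x i, f (x i))) j ≠ f j).card : ℝ)
          = ∑ j ∈ Finset.univ.filter fun j : Fin k => j ≠ x0 ∧ ∀ i : Fin n, x i ≠ j,
              (if A (fun i => (x i, f (x i))) j ≠ f j then (1:ℝ) else 0) := by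
      intro f
      rw [Finset.card_filter]
      push_cast [apply_ite]
      rfl
    calc ∑ f : Fin k → Bool, (1 / 2 ^ k : ℝ) *
          (((Finset.univ.filter fun j : Fin k => j ≠ x0 ∧ ∀ i : Fin n, x i ≠ j).filter
              fun j => A (fun i => (x i, f (x i))) j ≠ f j).card : ℝ)
        = ∑ f : Fin k → Bool, ∑ j ∈ Finset.univ.filter fun j : Fin k => j ≠ x0 ∧ ∀ i : Fin n, x i ≠ j,
            (1 / 2 ^ k : ℝ) * (if A (fun i => (x i, f (x i))) j ≠ f j then (1:ℝ) else 0) := by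
          refine Finset.sum_congr rfl fun f _ => ?_
          rw [hcardT f, Finset.mul_sum]
      _ = ∑ j ∈ Finset.univ.filter fun j : Fin k => j ≠ x0 ∧ ∀ i : Fin n, x i ≠ j,
            ∑ f : Fin k → Bool,
            (1 / 2 ^ k : ℝ) * (if A (fun i => (x i, f (x i))) j ≠ f j then (1:ℝ) else 0) :=
          Finset.sum_comm
      _ = ∑ j ∈ Finset.univ.filter fun j : Fin k => j ≠ x0 ∧ ∀ i : Fin n, x i ≠ j, (1/2 : ℝ) := by
          refine Finset.sum_congr rfl fun j hj => ?_
          rw [Finset.mem_filter] at hj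
          exact hhalf x j hj.2.2
      _ = (1/2) * ((Finset.univ.filter fun j : Fin k => j ≠ x0 ∧ ∀ i : Fin n, x i ≠ j).card : ℝ) := by
          rw [Finset.sum_const, nsmul_eq_mul, mul_comm]
  -- pointwise error lower bound
  have hE : ∀ (x : Fin n → Fin k) (f : Fin k → Bool),
      p * (((Finset.univ.filter fun j : Fin k => j ≠ x0 ∧ ∀ i : Fin n, x i ≠ j).filter
              fun j => A (fun i => (x i, f (x i))) j ≠ f j).card : ℝ)
        ≤ (μP {j : Fin k | A (fun i => (x i, f (x i))) j ≠ f j}).toReal := by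
    intro x f
    set T := (Finset.univ.filter fun j : Fin k => j ≠ x0 ∧ ∀ i : Fin n, x i ≠ j).filter
        fun j => A (fun i => (x i, f (x i))) j ≠ f j with hT
    have hsub : (↑T : Set (Fin k)) ⊆ {j : Fin k | A (fun i => (x i, f (x i))) j ≠ f j} := by
      intro j hj
      simp only [hT, Finset.coe_filter, Set.mem_setOf_eq, Finset.mem_filter] at hj ⊢
      exact hj.2
    have h1 : (μP ↑T).toReal ≤ (μP {j : Fin k | A (fun i => (x i, f (x i))) j ≠ f j}).toReal :=
      ENNReal.toReal_mono (measure_ne_top _ _) (measure_mono hsub)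
    have h2 : (μP ↑T).toReal = p * (T.card : ℝ) := by
      rw [meas_finset', ENNReal.toReal_sum (fun a _ => measure_ne_top _ _)]
      have : ∀ j ∈ T, (μP {j}).toReal = p := by
        intro j hj
        rw [hT, Finset.mem_filter, Finset.mem_filter] at hj
        exact hPj j hj.1.2.1
      rw [Finset.sum_congr rfl this, Finset.sum_const, nsmul_eq_mul, mul_comm]
    rw [← h2]
    exact h1
  -- the G computation
  have hG : ∑ x : Fin n → Fin k, ((Measure.pi fun _ : Fin n => μP) {x}).toReal *
        ((Finset.univ.filter fun j : Fin k => j ≠ x0 ∧ ∀ i : Fin n, x i ≠ j).card : ℝ)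
      = ((k:ℝ) - 1) * (1 - p) ^ n := by
    have hcardU : ∀ x : Fin n → Fin k,
        ((Finset.univ.filter fun j : Fin k => j ≠ x0 ∧ ∀ i : Fin n, x i ≠ j).card : ℝ)
          = ∑ j ∈ Finset.univ.filter fun j : Fin k => j ≠ x0,
              (if ∀ i : Fin n, x i ≠ j then (1:ℝ) else 0) := by
      intro x
      rw [← Finset.filter_filter, Finset.card_filter]
      push_cast [apply_ite]
      rfl
    calc ∑ x : Fin n → Fin k, ((Measure.pi fun _ : Fin n => μP) {x}).toReal *
        ((Finset.univ.filter fun j : Fin k => j ≠ x0 ∧ ∀ i : Fin n, x i ≠ j).card : ℝ)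
        = ∑ x : Fin n → Fin k, ∑ j ∈ Finset.univ.filter fun j : Fin k => j ≠ x0,
            ((Measure.pi fun _ : Fin n => μP) {x}).toReal * (if ∀ i : Fin n, x i ≠ j then (1:ℝ) else 0) := by
          refine Finset.sum_congr rfl fun x _ => ?_
          rw [hcardU x, Finset.mul_sum]
      _ = ∑ j ∈ Finset.univ.filter fun j : Fin k => j ≠ x0, ∑ x : Fin n → Fin k,
            ((Measure.pi fun _ : Fin n => μP) {x}).toReal * (if ∀ i : Fin n, x i ≠ j then (1:ℝ) else 0) :=
          Finset.sum_comm
      _ = ∑ j ∈ Finset.univ.filter fun j : Fin k => j ≠ x0, (1 - p) ^ n := by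
          refine Finset.sum_congr rfl fun j hj => ?_
          rw [Finset.mem_filter] at hj
          have hinner : ∀ x : Fin n → Fin k,
              ((Measure.pi fun _ : Fin n => μP) {x}).toReal * (if ∀ i : Fin n, x i ≠ j then (1:ℝ) else 0)
                = ∏ i : Fin n, ((μP {x i}).toReal * (if x i ≠ j then (1:ℝ) else 0)) := by
            intro x
            rw [Finset.prod_mul_distrib, ← hW x]
            congr 1
            by_cases hx : ∀ i : Fin n, x i ≠ j
            · rw [if_pos hx, Finset.prod_congr rfl (fun i _ => if_pos (hx i)), Finset.prod_const_one]
            · push_neg at hx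
              obtain ⟨i0, hi0⟩ := hx
              rw [if_neg (by push_neg; exact ⟨i0, hi0⟩),
                Finset.prod_eq_zero (Finset.mem_univ i0) (by rw [if_neg (by simp [hi0])])]
          rw [Finset.sum_congr rfl (fun x _ => hinner x)]
          have hps : ∏ _i : Fin n, (∑ a : Fin k, (μP {a}).toReal * (if a ≠ j then (1:ℝ) else 0))
              = ∑ x ∈ Fintype.piFinset (fun _ : Fin n => (Finset.univ : Finset (Fin k))),
                  ∏ i, ((μP {x i}).toReal * (if x i ≠ j then (1:ℝ) else 0)) :=
            Finset.prod_univ_sum _ _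
          rw [← Fintype.piFinset_univ, ← hps]
          have hsum1 : ∑ a : Fin k, (μP {a}).toReal * (if a ≠ j then (1:ℝ) else 0) = 1 - p := by
            have hpt : ∀ a : Fin k, (μP {a}).toReal * (if a ≠ j then (1:ℝ) else 0)
                = (μP {a}).toReal - (if a = j then (μP {a}).toReal else 0) := by
              intro a; by_cases ha : a = j <;> simp [ha]
            rw [Finset.sum_congr rfl (fun a _ => hpt a), Finset.sum_sub_distrib,
              sum_toReal_one', Finset.sum_ite_eq' Finset.univ j (fun a => (μP {a}).toReal),
              if_pos (Finset.mem_univ j), hPj j hj.2]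
          rw [Finset.prod_congr rfl (fun i _ => hsum1), Finset.prod_const, Finset.card_univ,
            Fintype.card_fin]
      _ = ((k:ℝ) - 1) * (1 - p) ^ n := by
          rw [Finset.sum_const, nsmul_eq_mul]
          congr 1
          have : (Finset.univ.filter fun j : Fin k => j ≠ x0) = Finset.univ.erase x0 := by
            rw [Finset.filter_ne']
          rw [this, Finset.card_erase_of_mem (Finset.mem_univ x0), Finset.card_univ, Fintype.card_fin,
            Nat.cast_sub (by omega)]
          simp
  -- Part 1
  have hpart1 : p * (1 / 2) *
        ∫ ω, ((Finset.univ.filter fun j : Fin k =>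
            j ≠ x0 ∧ ∀ i : Fin n, ω.1 i ≠ j).card : ℝ)
          ∂((Measure.pi fun _ : Fin n => μP).prod μf) ≤
      ∫ ω, (μP {j : Fin k |
            A (fun i => (ω.1 i, ω.2 (ω.1 i))) j ≠ ω.2 j}).toReal
          ∂((Measure.pi fun _ : Fin n => μP).prod μf) := by
    rw [hint (fun x f => (μP {j : Fin k | A (fun i => (x i, f (x i))) j ≠ f j}).toReal),
      hint (fun x _ => ((Finset.univ.filter fun j : Fin k =>
            j ≠ x0 ∧ ∀ i : Fin n, x i ≠ j).card : ℝ)),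
      hsumV, Finset.mul_sum]
    refine Finset.sum_le_sum fun x _ => ?_
    have hWnn : 0 ≤ ((Measure.pi fun _ : Fin n => μP) {x}).toReal := ENNReal.toReal_nonneg
    calc p * (1/2) * (((Measure.pi fun _ : Fin n => μP) {x}).toReal *
            ((Finset.univ.filter fun j : Fin k => j ≠ x0 ∧ ∀ i : Fin n, x i ≠ j).card : ℝ))
        = ((Measure.pi fun _ : Fin n => μP) {x}).toReal *
            (p * ((1/2) * ((Finset.univ.filter fun j : Fin k => j ≠ x0 ∧ ∀ i : Fin n, x i ≠ j).card : ℝ))) := by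
          ring
      _ = ((Measure.pi fun _ : Fin n => μP) {x}).toReal *
            (p * ∑ f : Fin k → Bool, (1 / 2 ^ k : ℝ) *
              (((Finset.univ.filter fun j : Fin k => j ≠ x0 ∧ ∀ i : Fin n, x i ≠ j).filter
                  fun j => A (fun i => (x i, f (x i))) j ≠ f j).card : ℝ)) := by
          rw [hclaimB x]
      _ ≤ ∑ f : Fin k → Bool,
            (((Measure.pi fun _ : Fin n => μP) {x}).toReal * (1 / 2 ^ k)) *
              (μP {j : Fin k | A (fun i => (x i, f (x i))) j ≠ f j}).toReal := by
          rw [Finset.mul_sum, Finset.mul_sum]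
          refine Finset.sum_le_sum fun f _ => ?_
          have h1 := hE x f
          have hV : (0:ℝ) ≤ 1 / 2 ^ k := by positivity
          calc ((Measure.pi fun _ : Fin n => μP) {x}).toReal *
                (p * ((1 / 2 ^ k : ℝ) *
                  (((Finset.univ.filter fun j : Fin k => j ≠ x0 ∧ ∀ i : Fin n, x i ≠ j).filter
                      fun j => A (fun i => (x i, f (x i))) j ≠ f j).card : ℝ)))
              = (((Measure.pi fun _ : Fin n => μP) {x}).toReal * (1 / 2 ^ k)) *
                  (p * (((Finset.univ.filter fun j : Fin k => j ≠ x0 ∧ ∀ i : Fin n, x i ≠ j).filter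
                      fun j => A (fun i => (x i, f (x i))) j ≠ f j).card : ℝ)) := by ring
            _ ≤ (((Measure.pi fun _ : Fin n => μP) {x}).toReal * (1 / 2 ^ k)) *
                  (μP {j : Fin k | A (fun i => (x i, f (x i))) j ≠ f j}).toReal := by
                exact mul_le_mul_of_nonneg_left h1 (by positivity)
  refine ⟨hpart1, fun hn => ?_⟩
  -- Part 2
  have hIu : ∫ ω, ((Finset.univ.filter fun j : Fin k =>
          j ≠ x0 ∧ ∀ i : Fin n, ω.1 i ≠ j).card : ℝ)
        ∂((Measure.pi fun _ : Fin n => μP).prod μf) = ((k:ℝ) - 1) * (1 - p) ^ n := by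
    rw [hint (fun x _ => ((Finset.univ.filter fun j : Fin k =>
          j ≠ x0 ∧ ∀ i : Fin n, x i ≠ j).card : ℝ)), hsumV, hG]
  have hnp : (n:ℝ) * p ≤ 1 / 2 := by
    have h1 : (n:ℝ) * p ≤ (((k:ℝ) - 1) / (16 * ε)) * p :=
      mul_le_mul_of_nonneg_right hn hp0.le
    have h2 : (((k:ℝ) - 1) / (16 * ε)) * p = 1 / 2 := by
      rw [hpdef]
      field_simp
      ring
    linarith
  have hpow : (1:ℝ) / 2 ≤ (1 - p) ^ n := by
    have h := one_add_mul_le_pow (a := -p) (by linarith) n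
    have heq : (1 + -p) ^ n = (1 - p) ^ n := by ring_nf
    rw [heq] at h
    have : (1:ℝ) + (n:ℝ) * (-p) = 1 - (n:ℝ) * p := by ring
    rw [this] at h
    linarith
  have hval : 2 * ε ≤ p * (1 / 2) * (((k:ℝ) - 1) * (1 - p) ^ n) := by
    have hpk : p * ((k:ℝ) - 1) = 8 * ε := by
      rw [hpdef]; field_simp
    nlinarith [hε0, hpow, pow_nonneg (by linarith : (0:ℝ) ≤ 1 - p) n]
  calc 2 * ε ≤ p * (1 / 2) * (((k:ℝ) - 1) * (1 - p) ^ n) := hval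
    _ = p * (1 / 2) * ∫ ω, ((Finset.univ.filter fun j : Fin k =>
          j ≠ x0 ∧ ∀ i : Fin n, ω.1 i ≠ j).card : ℝ)
        ∂((Measure.pi fun _ : Fin n => μP).prod μf) := by rw [hIu]
    _ ≤ _ := hpart1
end
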